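/- Every 4-regular graph that is properly 4-edge-colorable (class-1) has an external bisection: a partition of its vertices into two equal-size parts such that every vertex has at least 2 of its 4 neighbors in the opposite part. -/

import Mathlib

open Finset

open scoped Classical in
noncomputable def degIn {V : Type*} (G : SimpleGraph V) (S : Finset V) (x : V) : ℕ :=
  (S.filter fun y => G.Adj x y).card

open scoped Classical in
private lemma degIn_two_le {V : Type*} [DecidableEq V] (G : SimpleGraph V) (S : Finset V)
    (x u v : V) (hu : u ∈ S) (hv : v ∈ S) (hau : G.Adj x u) (hav : G.Adj x v) (huv : u ≠ v) :
    2 ≤ degIn G S x := by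
  have h2 : ({u, v} : Finset V).card = 2 := by
    rw [Finset.card_insert_of_notMem (by simpa using huv), Finset.card_singleton]
  rw [← h2]
  unfold degIn
  apply Finset.card_le_card
  intro z hz
  rcases Finset.mem_insert.mp hz with h | h
  · subst h
    exact Finset.mem_filter.mpr ⟨hu, hau⟩
  · rw [Finset.mem_singleton] at h
    subst h
    exact Finset.mem_filter.mpr ⟨hv, hav⟩

/-- Every class-1 4-regular graph (one admitting a proper 4-edge-coloring) has an external
bisection: equal parts with every vertex having at least 2 of its 4 neighbors opposite. -/
theorem class_one_four_regular_external_bisection {V : Type*} [Fintype V] [DecidableEq V]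
    (G : SimpleGraph V) [DecidableRel G.Adj] (hreg : G.IsRegularOfDegree 4)
    (c : V → V → Fin 4)
    (hsymm : ∀ x y, G.Adj x y → c x y = c y x)
    (hproper : ∀ x y z, G.Adj x y → G.Adj x z → y ≠ z → c x y ≠ c x z) :
    ∃ A : Finset V, 2 * A.card = Fintype.card V ∧
      (∀ x ∈ A, 2 ≤ degIn G Aᶜ x) ∧ (∀ y ∈ Aᶜ, 2 ≤ degIn G A y) := by
  classical
  have huniq : ∀ x y z, G.Adj x y → G.Adj x z → c x y = c x z → y = z := by
    intro x y z hy hz hc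
    by_contra hne
    exact hproper x y z hy hz hne hc
  have hexists : ∀ (i : Fin 4) (x : V), ∃ y, G.Adj x y ∧ c x y = i := by
    intro i x
    have hcard : (G.neighborFinset x).card = 4 := by
      exact hreg x
    have hinj : Set.InjOn (c x) (G.neighborFinset x) := by
      intro y hy z hz h
      exact huniq x y z (by simpa using hy) (by simpa using hz) h
    have himg : ((G.neighborFinset x).image (c x)).card = 4 := by
      rw [Finset.card_image_of_injOn hinj, hcard]
    have huniv : (G.neighborFinset x).image (c x) = Finset.univ := by
      apply Finset.eq_univ_of_card
      simpa using himg
    have hi : i ∈ (G.neighborFinset x).image (c x) := huniv ▸ Finset.mem_univ i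
    obtain ⟨y, hy, hcy⟩ := Finset.mem_image.mp hi
    exact ⟨y, by simpa using hy, hcy⟩
  set nf : Fin 4 → V → V := fun i x => Classical.choose (hexists i x) with hnf
  have hadj : ∀ i x, G.Adj x (nf i x) := fun i x => (Classical.choose_spec (hexists i x)).1
  have hcol : ∀ i x, c x (nf i x) = i := fun i x => (Classical.choose_spec (hexists i x)).2
  have hnf_eq : ∀ i x y, G.Adj x y → c x y = i → nf i x = y := by
    intro i x y hxy hc
    exact huniq x _ y (hadj i x) hxy (by rw [hcol, hc])
  have hinv : ∀ i, Function.Involutive (nf i) := by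
    intro i x
    apply hnf_eq
    · exact (hadj i x).symm
    · rw [← hsymm x (nf i x) (hadj i x)]
      exact hcol i x
  set f0 : Equiv.Perm V := Function.Involutive.toPerm _ (hinv 0) with hf0def
  set f1 : Equiv.Perm V := Function.Involutive.toPerm _ (hinv 1) with hf1def
  have hf0 : ∀ x, f0 x = nf 0 x := fun _ => rfl
  have hf1 : ∀ x, f1 x = nf 1 x := fun _ => rfl
  have hff0 : ∀ x, f0 (f0 x) = x := fun x => hinv 0 x
  have hff1 : ∀ x, f1 (f1 x) = x := fun x => hinv 1 x
  have hf0sq : f0 * f0 = 1 := by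
    ext x; simp [Equiv.Perm.mul_apply, hff0 x]
  have hf1sq : f1 * f1 = 1 := by
    ext x; simp [Equiv.Perm.mul_apply, hff1 x]
  have hf0inv : f0⁻¹ = f0 := by
    rw [← mul_eq_one_iff_inv_eq]; exact hf0sq
  have hf1inv : f1⁻¹ = f1 := by
    rw [← mul_eq_one_iff_inv_eq]; exact hf1sq
  set σ : Equiv.Perm V := f1 * f0 with hσdef
  have hσinv : σ⁻¹ = f0 * f1 := by
    rw [hσdef, mul_inv_rev, hf0inv, hf1inv]
  have hconj0 : f0 * σ * f0⁻¹ = σ⁻¹ := by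
    rw [hσdef, hσinv, hf0inv]
    calc f0 * (f1 * f0) * f0 = f0 * f1 * (f0 * f0) := by group
    _ = f0 * f1 := by rw [hf0sq, mul_one]
  have hconj1 : f1 * σ * f1⁻¹ = σ⁻¹ := by
    rw [hσdef, hσinv, hf1inv]
    calc f1 * (f1 * f0) * f1 = (f1 * f1) * (f0 * f1) := by group
    _ = f0 * f1 := by rw [hf1sq, one_mul]
  have hcomm0 : ∀ m : ℤ, f0 * σ ^ m = σ ^ (-m) * f0 := by
    intro m
    have h := map_zpow (MulAut.conj f0) σ m
    simp only [MulAut.conj_apply] at h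
    have h2 : f0 * σ ^ m * f0⁻¹ = σ ^ (-m) := by
      rw [h, hconj0, inv_zpow, ← zpow_neg]
    calc f0 * σ ^ m = (f0 * σ ^ m * f0⁻¹) * f0 := by group
    _ = σ ^ (-m) * f0 := by rw [h2]
  have hcomm1 : ∀ m : ℤ, f1 * σ ^ m = σ ^ (-m) * f1 := by
    intro m
    have h := map_zpow (MulAut.conj f1) σ m
    simp only [MulAut.conj_apply] at h
    have h2 : f1 * σ ^ m * f1⁻¹ = σ ^ (-m) := by
      rw [h, hconj1, inv_zpow, ← zpow_neg]
    calc f1 * σ ^ m = (f1 * σ ^ m * f1⁻¹) * f1 := by group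
    _ = σ ^ (-m) * f1 := by rw [h2]
  have happf0 : ∀ (m : ℤ) (x : V), f0 ((σ ^ m) x) = (σ ^ (-m)) (f0 x) := by
    intro m x
    have := congrArg (fun p : Equiv.Perm V => p x) (hcomm0 m)
    simpa [Equiv.Perm.mul_apply] using this
  have happf1 : ∀ (m : ℤ) (x : V), f1 ((σ ^ m) x) = (σ ^ (-m)) (f1 x) := by
    intro m x
    have := congrArg (fun p : Equiv.Perm V => p x) (hcomm1 m)
    simpa [Equiv.Perm.mul_apply] using this
  have hnofix : ∀ (i : Fin 4) (x : V), nf i x ≠ x := by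
    intro i x h
    have hax := hadj i x
    rw [h] at hax
    exact G.loopless.irrefl x hax
  have hσf0 : ∀ x, σ (f0 x) = f1 x := by
    intro x
    rw [hσdef]
    rw [Equiv.Perm.mul_apply]
    rw [hff0 x]
  have hzcomp : ∀ (a b : ℤ) (x : V), (σ ^ a) ((σ ^ b) x) = (σ ^ (a + b)) x := by
    intro a b x
    rw [← Equiv.Perm.mul_apply, ← zpow_add]
  -- key lemma : f0 x is never in the σ-orbit of x (even-cycle argument)
  have hkey : ∀ (x : V) (m : ℤ), f0 x ≠ (σ ^ m) x := by
    intro x m h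
    rcases Int.even_or_odd m with ⟨k, hk⟩ | ⟨k, hk⟩
    · have hfix : f0 ((σ ^ k) x) = (σ ^ k) x := by
        rw [happf0, h, hzcomp]
        congr 2
        omega
      exact hnofix 0 ((σ ^ k) x) (by rw [← hf0]; exact hfix)
    · have hf1x : f1 x = (σ ^ (m + 1)) x := by
        rw [← hσf0, h]
        have : σ ((σ ^ m) x) = (σ ^ (1 : ℤ)) ((σ ^ m) x) := by simp
        rw [this, hzcomp]
        congr 2
        omega
      have hfix : f1 ((σ ^ (k + 1)) x) = (σ ^ (k + 1)) x := by
        rw [happf1, hf1x, hzcomp]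
        congr 2
        omega
      exact hnofix 1 ((σ ^ (k + 1)) x) (by rw [← hf1]; exact hfix)
  -- component relation (dihedral orbit)
  set Rel : V → V → Prop := fun x y => ∃ m : ℤ, y = (σ ^ m) x ∨ y = (σ ^ m) (f0 x) with hReldef
  have hrefl : ∀ x, Rel x x := fun x => ⟨0, Or.inl (by simp)⟩
  have hsymmR : ∀ x y, Rel x y → Rel y x := by
    rintro x y ⟨m, h | h⟩
    · refine ⟨-m, Or.inl ?_⟩
      rw [h, hzcomp]
      simp
    · refine ⟨m, Or.inr ?_⟩
      have hy : f0 y = (σ ^ (-m)) x := by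
        rw [h, happf0, hff0]
      rw [hy, hzcomp]
      simp
  have htransR : ∀ x y z, Rel x y → Rel y z → Rel x z := by
    rintro x y z ⟨a, ha | ha⟩ ⟨b, hb | hb⟩
    · exact ⟨b + a, Or.inl (by rw [hb, ha, hzcomp])⟩
    · refine ⟨b + -a, Or.inr ?_⟩
      rw [hb, ha, happf0, hzcomp]
    · refine ⟨b + a, Or.inr ?_⟩
      rw [hb, ha, hzcomp]
    · refine ⟨b + -a, Or.inl ?_⟩
      rw [hb, ha, happf0, hff0, hzcomp]
  set s : Setoid V := ⟨Rel, ⟨hrefl, fun {x y} h => hsymmR x y h, fun {x y z} h h' => htransR x y z h h'⟩⟩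
    with hsdef
  set rep : V → V := fun x => Quotient.out (Quotient.mk s x) with hrepdef
  have hrep_rel : ∀ x, Rel (rep x) x := by
    intro x
    have := Quotient.exact (Quotient.out_eq (Quotient.mk s x))
    exact this
  have hrep_eq : ∀ x y, Rel x y → rep x = rep y := by
    intro x y h
    simp only [hrepdef]
    rw [Quotient.sound (a := x) (b := y) h]
  set A : Finset V := Finset.univ.filter (fun x => ∃ m : ℤ, x = (σ ^ m) (rep x)) with hAdef
  have hmemA : ∀ x, x ∈ A ↔ ∃ m : ℤ, x = (σ ^ m) (rep x) := by
    intro x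
    simp [hAdef]
  have hnotA : ∀ x, x ∉ A → ∃ m : ℤ, x = (σ ^ m) (f0 (rep x)) := by
    intro x hx
    rcases hrep_rel x with ⟨m, h | h⟩
    · exact absurd ((hmemA x).mpr ⟨m, h⟩) hx
    · exact ⟨m, h⟩
  -- rep is constant along f0 and f1 steps
  have hrepf0 : ∀ x, rep (f0 x) = rep x := by
    intro x
    exact (hrep_eq x (f0 x) ⟨0, Or.inr (by simp)⟩).symm
  have hrepf1 : ∀ x, rep (f1 x) = rep x := by
    intro x
    refine (hrep_eq x (f1 x) ⟨1, Or.inr ?_⟩).symm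
    rw [← hσf0 x]
    simp
  -- membership flips under f0 and f1
  have hσ1 : ∀ u : V, σ u = (σ ^ (1:ℤ)) u := by intro u; simp
  have hcancel : ∀ (m : ℤ) (u v : V), (σ ^ m) u = v → u = (σ ^ (-m)) v := by
    intro m u v h
    rw [← h, hzcomp]
    simp
  have hA0 : ∀ x, x ∈ A → f0 x ∉ A := by
    intro x hx hfx
    obtain ⟨m, hm⟩ := (hmemA x).mp hx
    obtain ⟨j, hj⟩ := (hmemA (f0 x)).mp hfx
    rw [hrepf0] at hj
    have hy0 : f0 x = (σ ^ (-m)) (f0 (rep x)) := by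
      conv_lhs => rw [hm]
      rw [happf0]
    have h3 := hcancel (-m) _ _ (hy0.symm.trans hj)
    rw [hzcomp] at h3
    exact hkey (rep x) _ h3
  have hA1 : ∀ x, x ∈ A → f1 x ∉ A := by
    intro x hx hfx
    obtain ⟨m, hm⟩ := (hmemA x).mp hx
    obtain ⟨j, hj⟩ := (hmemA (f1 x)).mp hfx
    rw [hrepf1] at hj
    have hy1 : f1 x = (σ ^ (1 + -m)) (f0 (rep x)) := by
      conv_lhs => rw [← hσf0 x, hm]
      rw [happf0, hσ1, hzcomp]
    have h3 := hcancel (1 + -m) _ _ (hy1.symm.trans hj)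
    rw [hzcomp] at h3
    exact hkey (rep x) _ h3
  have hAc0 : ∀ y, y ∉ A → f0 y ∈ A := by
    intro y hy
    obtain ⟨m, hm⟩ := hnotA y hy
    refine (hmemA (f0 y)).mpr ⟨-m, ?_⟩
    rw [hrepf0]
    conv_lhs => rw [hm]
    rw [happf0, hff0]
  have hAc1 : ∀ y, y ∉ A → f1 y ∈ A := by
    intro y hy
    obtain ⟨m, hm⟩ := hnotA y hy
    refine (hmemA (f1 y)).mpr ⟨1 + -m, ?_⟩
    rw [hrepf1]
    conv_lhs => rw [← hσf0 y, hm]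
    rw [happf0, hff0, hσ1, hzcomp]
  -- distinctness of the two opposite neighbors
  have hne01 : ∀ x, f0 x ≠ f1 x := by
    intro x h
    have h0 : c x (f0 x) = 0 := hcol 0 x
    have h1 : c x (f1 x) = 1 := hcol 1 x
    rw [h] at h0
    rw [h0] at h1
    exact absurd h1 (by decide)
  have hadj0 : ∀ x, G.Adj x (f0 x) := fun x => hadj 0 x
  have hadj1 : ∀ x, G.Adj x (f1 x) := fun x => hadj 1 x
  refine ⟨A, ?_, ?_, ?_⟩
  · have hbij : A.card = Aᶜ.card := by
      apply Finset.card_bij (fun x _ => f0 x)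
      · intro x hx
        simp only [Finset.mem_compl]
        exact hA0 x hx
      · intro x hx y hy h
        exact f0.injective h
      · intro y hy
        rw [Finset.mem_compl] at hy
        exact ⟨f0 y, hAc0 y hy, hff0 y⟩
    have := Finset.card_add_card_compl A
    omega
  · intro x hx
    exact degIn_two_le G Aᶜ x (f0 x) (f1 x) (Finset.mem_compl.mpr (hA0 x hx))
      (Finset.mem_compl.mpr (hA1 x hx)) (hadj0 x) (hadj1 x) (hne01 x)
  · intro y hy
    rw [Finset.mem_compl] at hy
    exact degIn_two_le G A y (f0 y) (f1 y) (hAc0 y hy) (hAc1 y hy)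
      (hadj0 y) (hadj1 y) (hne01 y)
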